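/- Interleaving identity for pairings: let G be a Gauss diagram on n strings and let p, q, s ∈ {1,…,n} be pairwise distinct. Let A be the arrow diagram with a single arrow from string p to string s (tail on p, head on s), let B be the arrow diagram with a single arrow from string q to string s, and let D_1, D_2 be the two arrow diagrams each consisting of one arrow from p to s and one arrow from q to s, distinguished by the two possible linear orders of the two arrow heads along string s. Then ⟨D_1, G⟩ + ⟨D_2, G⟩ = ⟨A, G⟩ · ⟨B, G⟩. -/

import Mathlib

/-!
Combinatorial Gauss diagrams on `n` strings and the tree invariants `Z I j`.

A Gauss diagram is encoded by a finite set of arrows; each arrow records the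
string (an element of `Fin n`) and the position (a rational number, increasing
in the direction of the orientation of the string) of its tail and of its head,
together with a sign `±1`.  Only the induced combinatorial data (linear order of
the endpoints along each string, the tail/head pairing and the signs) is ever
used by the definitions below.

The tree invariant `Z I j G = ∑_{A ∈ 𝒜_{I,j}} sign(A) ⟨A, G⟩` is computed as a
signed count over all subsets `S` of the arrows of `G` that form a planar tree
diagram with leaves on `I` and trunk on `j`: each pair `(A, φ)` of a planar tree
diagram `A ∈ 𝒜_{I,j}` together with an embedding `φ : A → G` corresponds
bijectively to the subset `S = Im φ` of the arrows of `G`, which is itself a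
planar tree diagram with leaves on `I` and trunk on `j`; the contribution of the
pair to the sum is `sign(A) · sign(φ) = (-1)^{#right-pointing arrows of S} · ∏_{a ∈ S} sign(a)`.
-/

open scoped Classical

/-- An arrow of a Gauss diagram on `n` strings: a tail endpoint, a head
endpoint (each given by the string it lies on and its position along that
string) and a sign. -/
structure GArrow (n : ℕ) where
  tailStr : Fin n
  tailPos : ℚ
  headStr : Fin n
  headPos : ℚ
  sign : ℤ
deriving DecidableEq

namespace GArrow

/-- The two endpoints of an arrow: `false` is the tail, `true` is the head. -/
def ep {n : ℕ} (a : GArrow n) : Bool → Fin n × ℚ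
  | false => (a.tailStr, a.tailPos)
  | true => (a.headStr, a.headPos)

end GArrow

/-- A Gauss diagram on `n` strings: a finite set of signed arrows with all
endpoints pairwise distinct, and all signs equal to `±1`. -/
structure GaussDiagram (n : ℕ) where
  arrows : Finset (GArrow n)
  sign_pm : ∀ a ∈ arrows, a.sign = 1 ∨ a.sign = -1
  endpoints_distinct : ∀ a ∈ arrows, ∀ b ∈ arrows, ∀ s t : Bool,
    a.ep s = b.ep t → a = b ∧ s = t

/-- `S` is a tree diagram with leaves on `I` and trunk on `j`:
* the head and the tail of every arrow lie on different strings;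
* for each `i ∈ I` there is exactly one arrow tail on string `i`, and there are
  no arrow tails on strings outside `I`;
* every arrow head lies on a string of `I ∪ {j}`;
* on each string `i ∈ I` all arrow heads precede the unique arrow tail. -/
def IsTreeDiagram {n : ℕ} (I : Finset (Fin n)) (j : Fin n)
    (S : Finset (GArrow n)) : Prop :=
  (∀ a ∈ S, a.tailStr ≠ a.headStr) ∧
  (∀ i ∈ I, ∃! a, a ∈ S ∧ a.tailStr = i) ∧
  (∀ a ∈ S, a.tailStr ∈ I) ∧
  (∀ a ∈ S, a.headStr ∈ I ∨ a.headStr = j) ∧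
  (∀ a ∈ S, ∀ b ∈ S, a.headStr = b.tailStr → a.headPos < b.tailPos)

/-- `ParentRel S s t` : string `s` is the parent of string `t` in the rooted
tree determined by the tree diagram `S`, i.e. the (unique) arrow with tail on
`t` has its head on `s`. -/
def ParentRel {n : ℕ} (S : Finset (GArrow n)) (s t : Fin n) : Prop :=
  ∃ a ∈ S, a.tailStr = t ∧ a.headStr = s

/-- `Descends S s k` : string `k` belongs to the subtree of string `s` (it is
`s` itself or an iterated child of `s`). -/
def Descends {n : ℕ} (S : Finset (GArrow n)) : Fin n → Fin n → Prop :=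
  Relation.ReflTransGen (ParentRel S)

/-- `S` is a *planar* tree diagram with leaves on `I` and trunk on `j`: the
rooted tree `T_S` determined by `S` can be drawn in the plane so that the
clockwise order of its leaves, starting from the root on string `j`, is the
order of the string numbers.  Combinatorially this says that:
* the parent relation makes the strings carrying the arrows into a tree rooted
  at `j` (every leaf string is an iterated child of `j`);
* the whole subtree hanging from an arrow lies on the same side of the string
  carrying the head of that arrow as its tail does;
* two subtrees hanging on the same side of a common string are ordered, along
  that string, compatibly with the order of the strings: for two arrow heads on
  the same string, with both tails on the left, the subtree attached closer to
  the beginning of the string is the one carrying the larger string numbers,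
  while for two tails on the right it is the one carrying the smaller string
  numbers. -/
def IsPlanarTreeDiagram {n : ℕ} (I : Finset (Fin n)) (j : Fin n)
    (S : Finset (GArrow n)) : Prop :=
  IsTreeDiagram I j S ∧
  (∀ i ∈ I, Relation.TransGen (ParentRel S) j i) ∧
  (∀ a ∈ S, ∀ k : Fin n, Descends S a.tailStr k →
    (a.tailStr < a.headStr ↔ k < a.headStr)) ∧
  (∀ a ∈ S, ∀ b ∈ S, a.headStr = b.headStr → a.headPos < b.headPos →
    ∀ k k' : Fin n, Descends S a.tailStr k → Descends S b.tailStr k' →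
      ((a.tailStr < a.headStr → b.tailStr < b.headStr → k' < k) ∧
       (a.headStr < a.tailStr → b.headStr < b.tailStr → k < k')))

/-- The sign `(-1)^q` of an (embedded) arrow diagram, where `q` is the number
of right-pointing arrows (tail on a string of smaller number than the head). -/
noncomputable def treeSign {n : ℕ} (S : Finset (GArrow n)) : ℤ :=
  (-1) ^ (S.filter fun a => a.tailStr < a.headStr).card

/-- The tree invariant `Z_{I,j}(G) = ∑_{A ∈ 𝒜_{I,j}} sign(A)·⟨A,G⟩`, computed
as the signed count of embedded planar tree diagrams with leaves on `I` and
trunk on `j` inside `G`.  In particular `Z ∅ j G = 1` (only `S = ∅`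
contributes). -/
noncomputable def Z {n : ℕ} (I : Finset (Fin n)) (j : Fin n)
    (G : GaussDiagram n) : ℤ :=
  ∑ S ∈ G.arrows.powerset,
    if IsPlanarTreeDiagram I j S then treeSign S * ∏ a ∈ S, a.sign else 0

/-- An arrow of an arrow diagram on `n` strings: the same datum as an arrow of
a Gauss diagram, but without a sign. -/
structure AArrow (n : ℕ) where
  tailStr : Fin n
  tailPos : ℚ
  headStr : Fin n
  headPos : ℚ
deriving DecidableEq

namespace AArrow

/-- The two endpoints of an arrow: `false` is the tail, `true` is the head. -/
def ep {n : ℕ} (a : AArrow n) : Bool → Fin n × ℚ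
  | false => (a.tailStr, a.tailPos)
  | true => (a.headStr, a.headPos)

end AArrow

/-- An embedding of the arrow diagram (with arrow set) `A` into the Gauss
diagram `G`: an injection of arrows sending tails to tails and heads to heads,
keeping each endpoint on the string with the same number and preserving the
linear order of the endpoints along each string. -/
def IsDiagEmbedding {n : ℕ} (A : Finset (AArrow n)) (G : GaussDiagram n)
    (f : {x // x ∈ A} → {y // y ∈ G.arrows}) : Prop :=
  Function.Injective f ∧
  (∀ x, (f x).1.tailStr = x.1.tailStr ∧ (f x).1.headStr = x.1.headStr) ∧
  (∀ (x y : {x // x ∈ A}) (s t : Bool),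
    (AArrow.ep x.1 s).1 = (AArrow.ep y.1 t).1 →
      ((AArrow.ep x.1 s).2 < (AArrow.ep y.1 t).2 ↔
        (GArrow.ep (f x).1 s).2 < (GArrow.ep (f y).1 t).2))

/-- The pairing `⟨A, G⟩ = ∑_{φ : A ↪ G} sign φ`, where the sum runs over all
embeddings of the arrow diagram `A` into the Gauss diagram `G` and `sign φ` is
the product of the signs of the arrows of `G` in the image of `φ`. -/
noncomputable def pairing {n : ℕ} (A : Finset (AArrow n)) (G : GaussDiagram n) :
    ℤ :=
  ∑ f : ({x // x ∈ A} → {y // y ∈ G.arrows}),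
    if IsDiagEmbedding A G f then ∏ x : {x // x ∈ A}, (f x).1.sign else 0

lemma pairing_single {n : ℕ} (G : GaussDiagram n) (a : AArrow n)
    (hts : a.tailStr ≠ a.headStr) :
    pairing {a} G = ∑ g ∈ G.arrows.filter
        (fun g => g.tailStr = a.tailStr ∧ g.headStr = a.headStr), g.sign := by
  classical
  letI : Unique {x // x ∈ ({a} : Finset (AArrow n))} :=
    ⟨⟨⟨a, Finset.mem_singleton_self a⟩⟩,
      fun x => Subtype.ext (Finset.mem_singleton.mp x.2)⟩
  have key : ∀ y : {y // y ∈ G.arrows},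
      IsDiagEmbedding {a} G (fun _ => y) ↔
        (y.1.tailStr = a.tailStr ∧ y.1.headStr = a.headStr) := by
    intro y
    constructor
    · intro hE
      exact hE.2.1 default
    · intro hy
      refine ⟨fun x₁ x₂ _ => Subsingleton.elim x₁ x₂, ?_, ?_⟩
      · intro x
        have hx : x.1 = a := Finset.mem_singleton.mp x.2
        rw [hx]; exact hy
      intro x₁ x₂ sb tb hst
      have h1 : x₁.1 = a := Finset.mem_singleton.mp x₁.2
      have h2 : x₂.1 = a := Finset.mem_singleton.mp x₂.2
      rw [h1, h2] at hst ⊢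
      cases sb <;> cases tb <;>
        simp only [AArrow.ep, GArrow.ep] at hst ⊢ <;>
        first
          | exact absurd hst hts
          | exact absurd hst.symm hts
          | simp [lt_irrefl]
  unfold pairing
  rw [← Equiv.sum_comp
    (Equiv.funUnique {x // x ∈ ({a} : Finset (AArrow n))} {y // y ∈ G.arrows}).symm]
  have : ∀ y : {y // y ∈ G.arrows},
      (if IsDiagEmbedding {a} G (fun _ => y)
        then ∏ _x : {x // x ∈ ({a} : Finset (AArrow n))}, y.1.sign else 0)
      = if y.1.tailStr = a.tailStr ∧ y.1.headStr = a.headStr then y.1.sign else 0 := by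
    intro y
    rw [key y]
    congr 1
    simp [Finset.prod_const]
  calc (∑ y : {y // y ∈ G.arrows},
      if IsDiagEmbedding {a} G ((Equiv.funUnique _ _).symm y)
        then ∏ x : {x // x ∈ ({a} : Finset (AArrow n))},
          (((Equiv.funUnique _ _).symm y) x).1.sign else 0)
      = ∑ y : {y // y ∈ G.arrows},
          if y.1.tailStr = a.tailStr ∧ y.1.headStr = a.headStr then y.1.sign else 0 := by
        exact Fintype.sum_congr _ _ this
    _ = ∑ g ∈ G.arrows, if g.tailStr = a.tailStr ∧ g.headStr = a.headStr then g.sign else 0 := by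
        rw [← Finset.sum_coe_sort G.arrows]
    _ = _ := by rw [Finset.sum_filter]

lemma pair_emb_iff {n : ℕ} (G : GaussDiagram n) (p q s : Fin n)
    (hpq : p ≠ q) (hps : p ≠ s) (hqs : q ≠ s) (ρ₁ ρ₂ : ℚ) (hρ : ρ₁ < ρ₂)
    (g h : {y // y ∈ G.arrows}) :
    IsDiagEmbedding {AArrow.mk p 0 s ρ₁, AArrow.mk q 0 s ρ₂} G
        (fun x => if x.1 = AArrow.mk p 0 s ρ₁ then g else h) ↔
      (g.1.tailStr = p ∧ g.1.headStr = s ∧ h.1.tailStr = q ∧ h.1.headStr = s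
        ∧ g.1.headPos < h.1.headPos) := by
  classical
  set a₁ : AArrow n := AArrow.mk p 0 s ρ₁ with ha₁
  set a₂ : AArrow n := AArrow.mk q 0 s ρ₂ with ha₂
  have ha12 : a₁ ≠ a₂ := by
    intro e; apply hpq; exact congrArg AArrow.tailStr e
  have ne2 : ¬ (a₂ = a₁) := fun e => ha12 e.symm
  have m₁ : a₁ ∈ ({a₁, a₂} : Finset (AArrow n)) := Finset.mem_insert_self _ _
  have m₂ : a₂ ∈ ({a₁, a₂} : Finset (AArrow n)) :=
    Finset.mem_insert_of_mem (Finset.mem_singleton_self _)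
  have mem_iff : ∀ x : {x // x ∈ ({a₁, a₂} : Finset (AArrow n))}, x.1 = a₁ ∨ x.1 = a₂ := by
    intro x
    rcases Finset.mem_insert.mp x.2 with h' | h'
    · exact Or.inl h'
    · exact Or.inr (Finset.mem_singleton.mp h')
  constructor
  · rintro ⟨hinj, hstr, hord⟩
    have h1 := hstr ⟨a₁, m₁⟩
    have h2 := hstr ⟨a₂, m₂⟩
    have h3 := hord ⟨a₁, m₁⟩ ⟨a₂, m₂⟩ true true rfl
    simp only [if_pos rfl, if_neg ne2] at h1 h2 h3
    simp only [AArrow.ep, GArrow.ep] at h3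
    exact ⟨h1.1, h1.2, h2.1, h2.2, h3.mp hρ⟩
  · rintro ⟨hg1, hg2, hh1, hh2, hlt⟩
    have hgh : g ≠ h := by
      intro e; apply hpq; rw [← hg1, ← hh1, e]
    have hgh' : ¬ (g = h) := hgh
    have hhg' : ¬ (h = g) := fun e => hgh e.symm
    have hnρ : ¬ ρ₂ < ρ₁ := not_lt_of_gt hρ
    have hnlt : ¬ ((h.1).headPos < (g.1).headPos) := not_lt_of_gt hlt
    refine ⟨?_, ?_, ?_⟩
    · intro x y hxy
      have hxy' : (if x.1 = a₁ then g else h) = (if y.1 = a₁ then g else h) := hxy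
      rcases mem_iff x with hx | hx <;> rcases mem_iff y with hy | hy <;>
        simp only [hx, hy, ne2, eq_self_iff_true, ite_true, ite_false, hgh', hhg'] at hxy' <;>
        exact Subtype.ext (hx.trans hy.symm)
    · intro x
      rcases mem_iff x with hx | hx <;>
        simp only [hx, ne2, eq_self_iff_true, ite_true, ite_false]
      · exact ⟨hg1, hg2⟩
      · exact ⟨hh1, hh2⟩
    · intro x y sb tb hst
      rcases mem_iff x with hx | hx <;> rcases mem_iff y with hy | hy <;>
        cases sb <;> cases tb <;>
        simp only [hx, hy, AArrow.ep, GArrow.ep, ne2, eq_self_iff_true, ite_true,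
          ite_false] at hst ⊢ <;>
        first
          | exact absurd hst hps | exact absurd hst.symm hps
          | exact absurd hst hqs | exact absurd hst.symm hqs
          | exact absurd hst hpq | exact absurd hst.symm hpq
          | simp [hρ, hlt, hnρ, hnlt, ha₁, ha₂, hρ.le]

lemma pairing_pair {n : ℕ} (G : GaussDiagram n) (p q s : Fin n)
    (hpq : p ≠ q) (hps : p ≠ s) (hqs : q ≠ s) (ρ₁ ρ₂ : ℚ) (hρ : ρ₁ < ρ₂) :
    pairing {AArrow.mk p 0 s ρ₁, AArrow.mk q 0 s ρ₂} G
      = ∑ g ∈ G.arrows.filter (fun g => g.tailStr = p ∧ g.headStr = s),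
          ∑ h ∈ G.arrows.filter (fun h => h.tailStr = q ∧ h.headStr = s),
            if g.headPos < h.headPos then g.sign * h.sign else 0 := by
  classical
  have ha12 : AArrow.mk p 0 s ρ₁ ≠ AArrow.mk q 0 s ρ₂ := by
    intro e; exact hpq (congrArg AArrow.tailStr e)
  have ne2 : ¬ (AArrow.mk q 0 s ρ₂ = AArrow.mk p 0 s ρ₁) := fun e => ha12 e.symm
  have m₁ : AArrow.mk p 0 s ρ₁ ∈
      ({AArrow.mk p 0 s ρ₁, AArrow.mk q 0 s ρ₂} : Finset (AArrow n)) :=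
    Finset.mem_insert_self _ _
  have m₂ : AArrow.mk q 0 s ρ₂ ∈
      ({AArrow.mk p 0 s ρ₁, AArrow.mk q 0 s ρ₂} : Finset (AArrow n)) :=
    Finset.mem_insert_of_mem (Finset.mem_singleton_self _)
  have mem_iff : ∀ x : {x // x ∈ ({AArrow.mk p 0 s ρ₁, AArrow.mk q 0 s ρ₂} :
      Finset (AArrow n))}, x.1 = AArrow.mk p 0 s ρ₁ ∨ x.1 = AArrow.mk q 0 s ρ₂ := by
    intro x
    rcases Finset.mem_insert.mp x.2 with h' | h'
    · exact Or.inl h'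
    · exact Or.inr (Finset.mem_singleton.mp h')
  set Y := {y // y ∈ G.arrows} with hY
  set e : Y × Y → ({x // x ∈ ({AArrow.mk p 0 s ρ₁, AArrow.mk q 0 s ρ₂} :
      Finset (AArrow n))} → Y) :=
    fun gh x => if x.1 = AArrow.mk p 0 s ρ₁ then gh.1 else gh.2 with he
  have hbij : Function.Bijective e := by
    constructor
    · intro u v huv
      have h1 : e u ⟨_, m₁⟩ = e v ⟨_, m₁⟩ := congrFun huv _
      have h2 : e u ⟨_, m₂⟩ = e v ⟨_, m₂⟩ := congrFun huv _
      simp only [he, ne2, eq_self_iff_true, ite_true, ite_false] at h1 h2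
      exact Prod.ext h1 h2
    · intro f
      refine ⟨(f ⟨_, m₁⟩, f ⟨_, m₂⟩), ?_⟩
      funext x
      rcases mem_iff x with hx | hx
      · simp only [he, hx, eq_self_iff_true, ite_true]
        exact congrArg f (Subtype.ext hx.symm)
      · simp only [he, hx, ne2, ite_false]
        exact congrArg f (Subtype.ext hx.symm)
  have hprod : ∀ gh : Y × Y,
      (∏ x : {x // x ∈ ({AArrow.mk p 0 s ρ₁, AArrow.mk q 0 s ρ₂} :
          Finset (AArrow n))}, ((e gh) x).1.sign)
        = gh.1.1.sign * gh.2.1.sign := by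
    intro gh
    have h0 : (∏ z ∈ ({AArrow.mk p 0 s ρ₁, AArrow.mk q 0 s ρ₂} : Finset (AArrow n)),
        (if z = AArrow.mk p 0 s ρ₁ then gh.1 else gh.2).1.sign)
        = gh.1.1.sign * gh.2.1.sign := by
      rw [Finset.prod_insert (by simpa using ha12), Finset.prod_singleton,
        if_pos rfl, if_neg ne2]
    rw [← h0, ← Finset.prod_coe_sort
      ({AArrow.mk p 0 s ρ₁, AArrow.mk q 0 s ρ₂} : Finset (AArrow n))
      (fun z => (if z = AArrow.mk p 0 s ρ₁ then gh.1 else gh.2).1.sign)]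
    try rfl
  have step1 : pairing {AArrow.mk p 0 s ρ₁, AArrow.mk q 0 s ρ₂} G
      = ∑ gh : Y × Y,
          if IsDiagEmbedding {AArrow.mk p 0 s ρ₁, AArrow.mk q 0 s ρ₂} G (e gh)
          then gh.1.1.sign * gh.2.1.sign else 0 := by
    unfold pairing
    rw [← Fintype.sum_bijective e hbij _ _ (fun gh => rfl)]
    refine Fintype.sum_congr _ _ ?_
    intro gh
    rw [hprod]
  rw [step1]
  have step2 : ∀ gh : Y × Y,
      (if IsDiagEmbedding {AArrow.mk p 0 s ρ₁, AArrow.mk q 0 s ρ₂} G (e gh)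
        then gh.1.1.sign * gh.2.1.sign else 0)
      = if (gh.1.1.tailStr = p ∧ gh.1.1.headStr = s) then
          (if (gh.2.1.tailStr = q ∧ gh.2.1.headStr = s) then
            (if gh.1.1.headPos < gh.2.1.headPos
              then gh.1.1.sign * gh.2.1.sign else 0)
          else 0) else 0 := by
    intro gh
    have hiff := pair_emb_iff G p q s hpq hps hqs ρ₁ ρ₂ hρ gh.1 gh.2
    simp only [he]
    rw [if_congr hiff rfl rfl]
    split_ifs <;> first | rfl | (exfalso; tauto)
  rw [Fintype.sum_congr _ _ step2, Fintype.sum_prod_type]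
  have inner_eq : ∀ gg : Y,
      (∑ hh : Y, if (gg.1.tailStr = p ∧ gg.1.headStr = s) then
          (if (hh.1.tailStr = q ∧ hh.1.headStr = s) then
            (if gg.1.headPos < hh.1.headPos then gg.1.sign * hh.1.sign else 0)
          else 0) else 0)
      = if (gg.1.tailStr = p ∧ gg.1.headStr = s) then
          (∑ h ∈ G.arrows.filter (fun h => h.tailStr = q ∧ h.headStr = s),
            if gg.1.headPos < h.headPos then gg.1.sign * h.sign else 0) else 0 := by
    intro gg
    by_cases hP : gg.1.tailStr = p ∧ gg.1.headStr = s
    · simp only [hP, and_self, if_true, ite_true]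
      rw [Finset.sum_coe_sort G.arrows
        (fun h => if (h.tailStr = q ∧ h.headStr = s) then
          (if gg.1.headPos < h.headPos then gg.1.sign * h.sign else 0) else 0)]
      rw [← Finset.sum_filter]
    · simp [hP]
  rw [Fintype.sum_congr _ _ inner_eq]
  rw [Finset.sum_coe_sort G.arrows
    (fun g => if (g.tailStr = p ∧ g.headStr = s) then
      (∑ h ∈ G.arrows.filter (fun h => h.tailStr = q ∧ h.headStr = s),
        if g.headPos < h.headPos then g.sign * h.sign else 0) else 0)]
  rw [← Finset.sum_filter]

theorem interleaving_pairing_identity' {n : ℕ} (G : GaussDiagram n)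
    (p q s : Fin n) (hpq : p ≠ q) (hps : p ≠ s) (hqs : q ≠ s) :
    pairing {AArrow.mk p 0 s 0, AArrow.mk q 0 s 1} G
        + pairing {AArrow.mk p 0 s 1, AArrow.mk q 0 s 0} G
      = pairing {AArrow.mk p 0 s 0} G * pairing {AArrow.mk q 0 s 0} G := by
  classical
  have e1 := pairing_pair G p q s hpq hps hqs 0 1 zero_lt_one
  have e2' := pairing_pair G q p s hpq.symm hqs hps 0 1 zero_lt_one
  have hswap : ({AArrow.mk p 0 s 1, AArrow.mk q 0 s 0} : Finset (AArrow n))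
      = {AArrow.mk q 0 s 0, AArrow.mk p 0 s 1} := Finset.pair_comm _ _
  have e2 : pairing {AArrow.mk p 0 s 1, AArrow.mk q 0 s 0} G
      = ∑ g ∈ G.arrows.filter (fun g => g.tailStr = p ∧ g.headStr = s),
          ∑ h ∈ G.arrows.filter (fun h => h.tailStr = q ∧ h.headStr = s),
            if h.headPos < g.headPos then h.sign * g.sign else 0 := by
    rw [hswap, e2']; exact Finset.sum_comm
  have s1 := pairing_single G (AArrow.mk p 0 s 0) hps
  have s2 := pairing_single G (AArrow.mk q 0 s 0) hqs
  dsimp only at s1 s2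
  rw [e1, e2, s1, s2]
  rw [← Finset.sum_add_distrib]
  have key : ∀ g ∈ G.arrows.filter (fun g => g.tailStr = p ∧ g.headStr = s),
      ((∑ h ∈ G.arrows.filter (fun h => h.tailStr = q ∧ h.headStr = s),
          if g.headPos < h.headPos then g.sign * h.sign else 0)
        + ∑ h ∈ G.arrows.filter (fun h => h.tailStr = q ∧ h.headStr = s),
          if h.headPos < g.headPos then h.sign * g.sign else 0)
      = ∑ h ∈ G.arrows.filter (fun h => h.tailStr = q ∧ h.headStr = s),
          g.sign * h.sign := by
    intro g hg
    rw [← Finset.sum_add_distrib]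
    refine Finset.sum_congr rfl ?_
    intro h hh
    rw [Finset.mem_filter] at hg hh
    have hne : g.headPos ≠ h.headPos := by
      intro heq
      have hep : g.ep true = h.ep true := by
        simp only [GArrow.ep, hg.2.2, hh.2.2, heq, Prod.mk.injEq]
        try exact ⟨rfl, rfl⟩
      have := (G.endpoints_distinct g hg.1 h hh.1 true true hep).1
      rw [this] at hg
      exact hpq (hg.2.1.symm.trans hh.2.1)
    rcases lt_or_gt_of_ne hne with hlt | hlt
    · rw [if_pos hlt, if_neg (not_lt_of_gt hlt), add_zero]
    · rw [if_neg (not_lt_of_gt hlt), if_pos hlt, zero_add, mul_comm]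
  rw [Finset.sum_congr rfl key, ← Finset.sum_mul_sum]

/-- **Interleaving identity for pairings.**  Let `p`, `q`, `s` be pairwise
distinct strings.  Let `A` be the arrow diagram with a single arrow from `p` to
`s`, `B` the one with a single arrow from `q` to `s`, and let `D₁`, `D₂` be the
two arrow diagrams each consisting of one arrow from `p` to `s` and one arrow
from `q` to `s`, distinguished by the two possible linear orders of the two
arrow heads along string `s`.  Then `⟨D₁,G⟩ + ⟨D₂,G⟩ = ⟨A,G⟩ · ⟨B,G⟩`. -/
theorem interleaving_pairing_identity {n : ℕ} (G : GaussDiagram n)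
    (p q s : Fin n) (hpq : p ≠ q) (hps : p ≠ s) (hqs : q ≠ s) :
    pairing {AArrow.mk p 0 s 0, AArrow.mk q 0 s 1} G
        + pairing {AArrow.mk p 0 s 1, AArrow.mk q 0 s 0} G
      = pairing {AArrow.mk p 0 s 0} G * pairing {AArrow.mk q 0 s 0} G := by
  exact interleaving_pairing_identity' G p q s hpq hps hqs
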